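/- arXiv:2307.01314 — 2 statements merged into one kernel-verified Lean document; each statement's English description precedes it below -/
import Mathlib

section
/- In any 2-2-2-2-2 configuration under the Modified CFLS coloring φ, no vertex is incident to edges of only two colors; that is, each of the five vertices is incident, within the configuration, to edges of at least three distinct colors. -/
namespace CFLS

/-- A vertex of `K_n` for `n = 2^(m^2)`: `m` blocks, each a string of `m` bits.
`x k` is the `k`-th block `x^(k+1)`, and `x k j` is its `j`-th bit (most significant first). -/
abbrev Vtx (m : ℕ) := Fin m → Fin m → Bool

/-- The `j`-th bit of a bit string (as a total function of `j : ℕ`). -/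
def bitAt {N : ℕ} (f : Fin N → Bool) (j : ℕ) : Bool :=
  if h : j < N then f ⟨j, h⟩ else false

/-- The value of a bit string read as a binary integer, most significant bit first. -/
def strToNat {N : ℕ} (f : Fin N → Bool) : ℕ :=
  ∑ j : Fin N, if f j then 2 ^ (N - 1 - j.val) else 0

/-- The `k`-th block of a vertex (as a total function of `k : ℕ`). -/
def blockAt {m : ℕ} (x : Vtx m) (k : ℕ) : Fin m → Bool :=
  if h : k < m then x ⟨k, h⟩ else fun _ => false

/-- The least block index at which `x` and `y` differ. -/
noncomputable def firstDiffBlock {m : ℕ} (x y : Vtx m) : ℕ :=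
  sInf {k | blockAt x k ≠ blockAt y k}

/-- The position (1-indexed) of the first bit at which two bit strings differ; `0` if equal. -/
noncomputable def firstDiffIdx {N : ℕ} (f g : Fin N → Bool) : ℕ :=
  if f = g then 0 else sInf {j | bitAt f j ≠ bitAt g j} + 1

/-- The value of a vertex read as a binary integer (concatenation of its blocks). -/
def vtxToNat {m : ℕ} (x : Vtx m) : ℕ :=
  ∑ k : Fin m, strToNat (x k) * (2 ^ m) ^ (m - 1 - k.val)

/-- The colors of the Modified CFLS coloring:
`((i, {x^(i), y^(i)}), i_1, …, i_m, δ_1, …, δ_m)`. -/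
abbrev Color (m : ℕ) := (ℕ × Set (Fin m → Bool)) × (Fin m → ℕ) × (Fin m → ℤ)

/-- The Modified CFLS color of the edge `xy` assuming `x ≤ y` as binary integers. -/
noncomputable def phiAux {m : ℕ} (x y : Vtx m) : Color m :=
  ((firstDiffBlock x y,
      {blockAt x (firstDiffBlock x y), blockAt y (firstDiffBlock x y)}),
   fun k => firstDiffIdx (x k) (y k),
   fun k => if strToNat (x k) ≤ strToNat (y k) then (1 : ℤ) else -1)

/-- The Modified CFLS coloring `φ`. -/
noncomputable def phi {m : ℕ} (x y : Vtx m) : Color m :=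
  if vtxToNat x ≤ vtxToNat y then phiAux x y else phiAux y x

/-- The ten edges among five vertices. -/
def edgeList {m : ℕ} (a b c d e : Vtx m) : List (Vtx m × Vtx m) :=
  [(a,b),(a,c),(a,d),(a,e),(b,c),(b,d),(b,e),(c,d),(c,e),(d,e)]

/-- The number of the ten edges among `a,b,c,d,e` receiving color `col` under `φ`. -/
noncomputable def colorCount {m : ℕ} (a b c d e : Vtx m) (col : Color m) : ℕ :=
  ((edgeList a b c d e).map fun p => phi p.1 p.2).countP fun x =>
    @decide (x = col) (Classical.propDecidable _)

/-- Five pairwise distinct vertices. -/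
def Distinct5 {m : ℕ} (a b c d e : Vtx m) : Prop :=
  a ≠ b ∧ a ≠ c ∧ a ≠ d ∧ a ≠ e ∧ b ≠ c ∧ b ≠ d ∧ b ≠ e ∧ c ≠ d ∧ c ≠ e ∧ d ≠ e

/-- `col` appears on some edge among `a,b,c,d,e`. -/
noncomputable def IsAttained {m : ℕ} (a b c d e : Vtx m) (col : Color m) : Prop :=
  colorCount a b c d e col ≠ 0

/-- A 2-2-2-2-2 configuration: five distinct vertices such that `φ` on the ten edges
among them takes exactly five values, each attained on exactly two edges. -/
def IsConfig22222 {m : ℕ} (a b c d e : Vtx m) : Prop :=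
  Distinct5 a b c d e ∧
  ∀ col : Color m, colorCount a b c d e col = 0 ∨ colorCount a b c d e col = 2

/-- The color class of `col` is a matching: two vertex-disjoint edges of color `col`. -/
def IsMatchingClass {m : ℕ} (a b c d e : Vtx m) (col : Color m) : Prop :=
  ∃ p ∈ edgeList a b c d e, ∃ q ∈ edgeList a b c d e,
    phi p.1 p.2 = col ∧ phi q.1 q.2 = col ∧
    p.1 ≠ q.1 ∧ p.1 ≠ q.2 ∧ p.2 ≠ q.1 ∧ p.2 ≠ q.2

/-- The color class of `col` is a path: two distinct edges of color `col` sharing a vertex. -/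
def IsPathClass {m : ℕ} (a b c d e : Vtx m) (col : Color m) : Prop :=
  ∃ p ∈ edgeList a b c d e, ∃ q ∈ edgeList a b c d e,
    p ≠ q ∧ phi p.1 p.2 = col ∧ phi q.1 q.2 = col ∧
    (p.1 = q.1 ∨ p.1 = q.2 ∨ p.2 = q.1 ∨ p.2 = q.2)



/-! ### Auxiliary lemmas -/

section Aux

variable {N : ℕ}

lemma digit_sum_lt : ∀ (M B : ℕ) (d : Fin M → ℕ), (∀ k, d k < B) →
    (∑ k : Fin M, d k * B ^ (M - 1 - k.val)) < B ^ M := by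
  intro M
  induction M with
  | zero => intro B d _; simp
  | succ M ih =>
    intro B d hd
    rw [Fin.sum_univ_succ]
    have htail : (∑ i : Fin M, d i.succ * B ^ (M + 1 - 1 - (i.succ : Fin (M+1)).val))
        = ∑ i : Fin M, (fun j : Fin M => d j.succ) i * B ^ (M - 1 - i.val) := by
      apply Finset.sum_congr rfl; intro i _
      congr 2
      simp [Fin.val_succ]
      omega
    rw [htail]
    have h1 := ih B (fun j => d j.succ) (fun j => hd j.succ)
    have h0 : d 0 < B := hd 0
    have : d 0 * B ^ (M + 1 - 1 - (0 : Fin (M+1)).val) = d 0 * B ^ M := by norm_num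
    rw [this]
    calc d 0 * B ^ M + ∑ i : Fin M, (fun j : Fin M => d j.succ) i * B ^ (M - 1 - i.val)
        < d 0 * B ^ M + B ^ M := by beta_reduce; omega
      _ = (d 0 + 1) * B ^ M := by ring
      _ ≤ B * B ^ M := Nat.mul_le_mul_right _ h0
      _ = B ^ (M + 1) := by ring

lemma digit_sum_lt_sum : ∀ (M B : ℕ) (d e : Fin M → ℕ), (∀ k, d k < B) →
    ∀ (s : Fin M), (∀ k, k < s → d k = e k) → d s < e s →
    (∑ k : Fin M, d k * B ^ (M - 1 - k.val)) < ∑ k : Fin M, e k * B ^ (M - 1 - k.val) := by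
  intro M
  induction M with
  | zero => intro B d e _ s; exact absurd s.isLt (by omega)
  | succ M ih =>
    intro B d e hd s hagree hlt
    rw [Fin.sum_univ_succ, Fin.sum_univ_succ]
    have hexp : ∀ i : Fin M, (M + 1 - 1 - (i.succ : Fin (M+1)).val) = M - 1 - i.val := by
      intro i; simp [Fin.val_succ]; omega
    have htd : (∑ i : Fin M, d i.succ * B ^ (M + 1 - 1 - (i.succ : Fin (M+1)).val))
        = ∑ i : Fin M, (fun j : Fin M => d j.succ) i * B ^ (M - 1 - i.val) :=
      Finset.sum_congr rfl fun i _ => by rw [hexp i]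
    have hte : (∑ i : Fin M, e i.succ * B ^ (M + 1 - 1 - (i.succ : Fin (M+1)).val))
        = ∑ i : Fin M, (fun j : Fin M => e j.succ) i * B ^ (M - 1 - i.val) :=
      Finset.sum_congr rfl fun i _ => by rw [hexp i]
    rw [htd, hte]
    have h00 : (M + 1 - 1 - (0 : Fin (M+1)).val) = M := by norm_num
    rw [h00]
    rcases Fin.eq_zero_or_eq_succ s with hs0 | ⟨j, hsj⟩
    · subst hs0
      have h1 : (∑ i : Fin M, (fun j : Fin M => d j.succ) i * B ^ (M - 1 - i.val)) < B ^ M :=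
        digit_sum_lt M B _ (fun j => hd j.succ)
      have h2 : (d 0 + 1) * B ^ M ≤ e 0 * B ^ M := Nat.mul_le_mul_right _ hlt
      have h2' : (d 0 + 1) * B ^ M = d 0 * B ^ M + B ^ M := by ring
      omega
    · subst hsj
      have h0 : d 0 = e 0 := hagree 0 j.succ_pos
      have h0' : d 0 * B ^ M = e 0 * B ^ M := by rw [h0]
      have h1 := ih B (fun k => d k.succ) (fun k => e k.succ) (fun k => hd k.succ) j
        (fun k hk => hagree k.succ (Fin.succ_lt_succ_iff.mpr hk)) (by simpa using hlt)
      beta_reduce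
      omega

lemma strToNat_eq_digit (f : Fin N → Bool) :
    strToNat f = ∑ j : Fin N, (if f j then 1 else 0) * 2 ^ (N - 1 - j.val) := by
  unfold strToNat
  exact Finset.sum_congr rfl fun j _ => by split <;> simp

lemma strToNat_lt_two_pow (f : Fin N → Bool) : strToNat f < 2 ^ N := by
  rw [strToNat_eq_digit]
  exact digit_sum_lt N 2 _ (fun k => by split <;> omega)

lemma strToNat_lt_of {f g : Fin N → Bool} (s : Fin N)
    (hagree : ∀ j, j < s → f j = g j) (hf : f s = false) (hg : g s = true) :
    strToNat f < strToNat g := by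
  rw [strToNat_eq_digit, strToNat_eq_digit]
  apply digit_sum_lt_sum N 2 _ _ (fun k => by split <;> omega) s
  · intro k hk; rw [hagree k hk]
  · rw [hf, hg]; norm_num

lemma vtx_lt_of {m : ℕ} {x y : Vtx m} (s : Fin m)
    (hagree : ∀ k, k < s → x k = y k) (hlt : strToNat (x s) < strToNat (y s)) :
    vtxToNat x < vtxToNat y := by
  unfold vtxToNat
  apply digit_sum_lt_sum m (2^m) _ _ (fun k => strToNat_lt_two_pow _) s
  · intro k hk; rw [hagree k hk]
  · exact hlt

lemma bitAt_fin (f : Fin N → Bool) (j : Fin N) : bitAt f j.val = f j := by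
  unfold bitAt
  rw [dif_pos j.isLt]

lemma blockAt_fin {m : ℕ} (x : Vtx m) (k : Fin m) : blockAt x k.val = x k := by
  unfold blockAt
  rw [dif_pos k.isLt]

lemma fdi_spec {f g : Fin N → Bool} (h : f ≠ g) :
    ∃ s : Fin N, firstDiffIdx f g = s.val + 1 ∧ f s ≠ g s ∧
      ∀ j : Fin N, j < s → f j = g j := by
  obtain ⟨j0, hj0⟩ := Function.ne_iff.mp h
  have hne : {j | bitAt f j ≠ bitAt g j}.Nonempty :=
    ⟨j0.val, by simpa [bitAt_fin] using hj0⟩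
  have hmem := Nat.sInf_mem hne
  set s0 := sInf {j | bitAt f j ≠ bitAt g j} with hs0
  have hs0N : s0 < N := by
    by_contra hge
    apply hmem
    unfold bitAt
    rw [dif_neg (by omega), dif_neg (by omega)]
  refine ⟨⟨s0, hs0N⟩, ?_, ?_, ?_⟩
  · unfold firstDiffIdx; rw [if_neg h]
  · have : bitAt f s0 ≠ bitAt g s0 := hmem
    rwa [show s0 = (⟨s0, hs0N⟩ : Fin N).val from rfl, bitAt_fin, bitAt_fin] at this
  · intro j hj
    have : j.val ∉ {j | bitAt f j ≠ bitAt g j} := Nat.notMem_of_lt_sInf hj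
    simp only [Set.mem_setOf_eq, not_not, bitAt_fin] at this
    exact this

lemma fdi_eq_zero_iff {f g : Fin N → Bool} : firstDiffIdx f g = 0 ↔ f = g := by
  unfold firstDiffIdx
  split <;> simp_all

lemma fdi_comm (f g : Fin N → Bool) : firstDiffIdx f g = firstDiffIdx g f := by
  unfold firstDiffIdx
  by_cases h : f = g
  · rw [if_pos h, if_pos h.symm]
  · rw [if_neg h, if_neg (fun e => h e.symm)]
    congr 2
    exact Set.ext fun j => ne_comm

lemma fdi_eq_succ_of {f g : Fin N → Bool} (s : Fin N)
    (h1 : f s ≠ g s) (h2 : ∀ j : Fin N, j < s → f j = g j) :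
    firstDiffIdx f g = s.val + 1 := by
  have hfg : f ≠ g := fun e => h1 (by rw [e])
  obtain ⟨s', he, hd, hmin⟩ := fdi_spec hfg
  rw [he]
  congr 1
  rcases lt_trichotomy s' s with hlt | heq | hgt
  · exact absurd (h2 s' hlt) hd
  · rw [heq]
  · exact absurd (hmin s hgt) h1

lemma strToNat_lt_iff_of {f g : Fin N → Bool} (s : Fin N)
    (hagree : ∀ j : Fin N, j < s → f j = g j) (hne : f s ≠ g s) :
    (strToNat f < strToNat g ↔ f s = false) := by
  cases hf : f s with
  | false =>
    have hg : g s = true := by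
      cases hgv : g s
      · exact absurd (hf.trans hgv.symm) hne
      · rfl
    simp only [iff_true]
    exact strToNat_lt_of s hagree hf hg
  | true =>
    have hg : g s = false := by
      cases hgv : g s
      · rfl
      · exact absurd (hf.trans hgv.symm) hne
    have : strToNat g < strToNat f :=
      strToNat_lt_of s (fun j hj => (hagree j hj).symm) hg hf
    simp only [Bool.true_eq_false, iff_false, not_lt]
    omega

lemma strToNat_inj {f g : Fin N → Bool} (h : strToNat f = strToNat g) : f = g := by
  by_contra hne
  obtain ⟨s, _, hd, hmin⟩ := fdi_spec hne
  have := strToNat_lt_iff_of s hmin hd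
  have h2 := strToNat_lt_iff_of (f := g) (g := f) s (fun j hj => (hmin j hj).symm)
    (fun e => hd e.symm)
  cases hfs : f s
  · have : strToNat f < strToNat g := this.mpr hfs
    omega
  · have hgs : g s = false := by
      cases hgv : g s
      · rfl
      · exact absurd (hfs.trans hgv.symm) hd
    have : strToNat g < strToNat f := h2.mpr hgs
    omega

end Aux


section Aux2

variable {m : ℕ} {x y z w : Vtx m}

lemma fdb_spec (h : x ≠ y) :
    ∃ i : Fin m, firstDiffBlock x y = i.val ∧ x i ≠ y i ∧
      ∀ k : Fin m, k < i → x k = y k := by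
  obtain ⟨k0, hk0⟩ := Function.ne_iff.mp h
  have hne : {k | blockAt x k ≠ blockAt y k}.Nonempty :=
    ⟨k0.val, by simpa [blockAt_fin] using hk0⟩
  have hmem := Nat.sInf_mem hne
  set i0 := sInf {k | blockAt x k ≠ blockAt y k} with hi0
  have hi0m : i0 < m := by
    by_contra hge
    apply hmem
    unfold blockAt
    rw [dif_neg (by omega), dif_neg (by omega)]
  refine ⟨⟨i0, hi0m⟩, rfl, ?_, ?_⟩
  · have : blockAt x i0 ≠ blockAt y i0 := hmem
    rwa [show i0 = (⟨i0, hi0m⟩ : Fin m).val from rfl, blockAt_fin, blockAt_fin] at this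
  · intro k hk
    have : k.val ∉ {k | blockAt x k ≠ blockAt y k} := Nat.notMem_of_lt_sInf hk
    simp only [Set.mem_setOf_eq, not_not, blockAt_fin] at this
    exact this

lemma fdb_eq_of (i : Fin m) (h1 : x i ≠ y i) (h2 : ∀ k : Fin m, k < i → x k = y k) :
    firstDiffBlock x y = i.val := by
  have hxy : x ≠ y := fun e => h1 (by rw [e])
  obtain ⟨i', he, hd, hmin⟩ := fdb_spec hxy
  rw [he]
  congr 1
  rcases lt_trichotomy i' i with hlt | heq | hgt
  · exact absurd (h2 i' hlt) hd
  · rw [heq]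
  · exact absurd (hmin i hgt) h1

lemma fdb_gt_of (i : Fin m) (hne : x ≠ y) (h2 : ∀ k : Fin m, k ≤ i → x k = y k) :
    i.val < firstDiffBlock x y := by
  obtain ⟨j, he, hd, _⟩ := fdb_spec hne
  rw [he]
  rcases le_or_gt j i with hle | hlt
  · exact absurd (h2 j hle) hd
  · exact hlt

lemma fdb_comm (x y : Vtx m) : firstDiffBlock x y = firstDiffBlock y x := by
  unfold firstDiffBlock
  congr 1
  exact Set.ext fun k => ne_comm

lemma vtx_lt_iff (h : x ≠ y) (i : Fin m) (hi : firstDiffBlock x y = i.val) :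
    vtxToNat x < vtxToNat y ↔ strToNat (x i) < strToNat (y i) := by
  obtain ⟨j, he, hd, hmin⟩ := fdb_spec h
  have hij : j = i := Fin.val_injective (by rw [← he, hi])
  subst hij
  constructor
  · intro hv
    rcases lt_trichotomy (strToNat (x j)) (strToNat (y j)) with h1 | h1 | h1
    · exact h1
    · exact absurd (strToNat_inj h1) hd
    · have := vtx_lt_of j (fun k hk => (hmin k hk).symm) h1
      omega
  · exact fun hs => vtx_lt_of j hmin hs

lemma vtxToNat_inj (h : vtxToNat x = vtxToNat y) : x = y := by
  by_contra hne
  obtain ⟨j, he, hd, hmin⟩ := fdb_spec hne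
  rcases lt_trichotomy (strToNat (x j)) (strToNat (y j)) with h1 | h1 | h1
  · have := vtx_lt_of j hmin h1; omega
  · exact hd (strToNat_inj h1)
  · have := vtx_lt_of j (fun k hk => (hmin k hk).symm) h1; omega

lemma vtx_lt_or (h : x ≠ y) : vtxToNat x < vtxToNat y ∨ vtxToNat y < vtxToNat x := by
  rcases lt_trichotomy (vtxToNat x) (vtxToNat y) with h1 | h1 | h1
  · exact Or.inl h1
  · exact absurd (vtxToNat_inj h1) h
  · exact Or.inr h1

lemma phi_comm (x y : Vtx m) : phi x y = phi y x := by
  by_cases hxy : x = y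
  · rw [hxy]
  unfold phi
  rcases vtx_lt_or hxy with h | h
  · rw [if_pos (le_of_lt h), if_neg (by omega)]
  · rw [if_neg (by omega), if_pos (le_of_lt h)]

lemma phi_fdb (h : x ≠ y) : (phi x y).1.1 = firstDiffBlock x y := by
  unfold phi phiAux
  split
  · rfl
  · exact fdb_comm y x

lemma phi_pair (h : x ≠ y) :
    (phi x y).1.2 = {blockAt x (firstDiffBlock x y), blockAt y (firstDiffBlock x y)} := by
  unfold phi phiAux
  split
  · rfl
  · rw [fdb_comm y x]
    exact Set.pair_comm _ _

lemma phi_idx (x y : Vtx m) (k : Fin m) :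
    (phi x y).2.1 k = firstDiffIdx (x k) (y k) := by
  unfold phi phiAux
  split
  · rfl
  · exact fdi_comm (y k) (x k)

/-- orientation-normalized δ component -/
noncomputable def dval (x y : Vtx m) (k : Fin m) : ℤ :=
  if vtxToNat x ≤ vtxToNat y then (if strToNat (x k) ≤ strToNat (y k) then 1 else -1)
  else (if strToNat (y k) ≤ strToNat (x k) then 1 else -1)

lemma phi_dval (x y : Vtx m) (k : Fin m) : (phi x y).2.2 k = dval x y k := by
  unfold phi phiAux dval
  split <;> rfl

lemma dval_one_iff (k : Fin m) (hne : strToNat (x k) ≠ strToNat (y k)) :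
    (dval x y k = 1 ↔ ((vtxToNat x ≤ vtxToNat y) ↔ strToNat (x k) < strToNat (y k))) := by
  unfold dval
  split_ifs with hP hQ hQ
  · have : strToNat (x k) < strToNat (y k) := lt_of_le_of_ne hQ hne
    simp [iff_true_intro hP, this]
  · have : ¬ strToNat (x k) < strToNat (y k) := fun hl => hQ (le_of_lt hl)
    simp [iff_true_intro hP, this]
  · have : ¬ strToNat (x k) < strToNat (y k) := by omega
    simp [iff_false_intro hP, this]
  · have : strToNat (x k) < strToNat (y k) := by omega
    simp [iff_false_intro hP, this]

lemma dval_eq_one_iff_of_eq {k : Fin m} (h : dval x y k = dval z w k) :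
    (dval x y k = 1 ↔ dval z w k = 1) := by rw [h]

/-- consequences of equality of colors, for distinct vertices -/
lemma phi_eq_elim (hxy : x ≠ y) (hzw : z ≠ w) (h : phi x y = phi z w) :
    firstDiffBlock x y = firstDiffBlock z w ∧
    ({blockAt x (firstDiffBlock x y), blockAt y (firstDiffBlock x y)} : Set (Fin m → Bool))
      = {blockAt z (firstDiffBlock z w), blockAt w (firstDiffBlock z w)} ∧
    (∀ k : Fin m, firstDiffIdx (x k) (y k) = firstDiffIdx (z k) (w k)) ∧
    (∀ k : Fin m, dval x y k = dval z w k) := by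
  refine ⟨?_, ?_, ?_, ?_⟩
  · rw [← phi_fdb hxy, ← phi_fdb hzw, h]
  · rw [← phi_pair hxy, ← phi_pair hzw, h]
  · intro k; rw [← phi_idx x y k, ← phi_idx z w k, h]
  · intro k; rw [← phi_dval x y k, ← phi_dval z w k, h]

lemma pair_eq_split {α : Type*} {a b c d : α} (hab : a ≠ b)
    (h : ({a, b} : Set α) = {c, d}) : (a = c ∧ b = d) ∨ (a = d ∧ b = c) := by
  have ha : a ∈ ({c, d} : Set α) := h ▸ (Set.mem_insert a {b})
  have hb : b ∈ ({c, d} : Set α) := h ▸ (Set.mem_insert_of_mem a rfl)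
  have hc : c ∈ ({a, b} : Set α) := h ▸ (Set.mem_insert c {d})
  have hd : d ∈ ({a, b} : Set α) := h ▸ (Set.mem_insert_of_mem c rfl)
  simp only [Set.mem_insert_iff, Set.mem_singleton_iff] at ha hb hc hd
  tauto

end Aux2


section Aux3

variable {N m : ℕ}

lemma fdi_elim {f g : Fin N → Bool} {s : ℕ} (h : firstDiffIdx f g = s + 1) :
    ∃ sF : Fin N, sF.val = s ∧ f sF ≠ g sF ∧ ∀ j : Fin N, j < sF → f j = g j := by
  have hfg : f ≠ g := by
    intro e
    rw [fdi_eq_zero_iff.mpr e] at h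
    omega
  obtain ⟨sF, he, hd, hmin⟩ := fdi_spec hfg
  rw [he] at h
  exact ⟨sF, by omega, hd, hmin⟩

lemma bool_ne_iff {a b : Bool} (h : a ≠ b) : (a = false ↔ b = true) := by
  cases a <;> cases b <;> simp_all

/-- if `g` and `h'` both first differ from `f` at the same position, they agree there,
so their own first difference is strictly later (or they are equal). -/
lemma fdi_between {f g h' : Fin N → Bool} {F : ℕ}
    (h1 : firstDiffIdx f g = F) (h2 : firstDiffIdx f h' = F) :
    firstDiffIdx g h' = 0 ∨ F < firstDiffIdx g h' := by
  by_cases hgh : g = h'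
  · exact Or.inl (fdi_eq_zero_iff.mpr hgh)
  right
  obtain ⟨r, hr, hd, hmin⟩ := fdi_spec hgh
  rw [hr]
  cases F with
  | zero =>
    exact absurd ((fdi_eq_zero_iff.mp h1).symm.trans (fdi_eq_zero_iff.mp h2)) hgh
  | succ s =>
    obtain ⟨sF, hsv, hds, hms⟩ := fdi_elim h1
    obtain ⟨sF', hsv', hds', hms'⟩ := fdi_elim h2
    have hss : sF' = sF := Fin.val_injective (hsv'.trans hsv.symm)
    subst hss
    have hlt : sF' < r := by
      rcases lt_trichotomy r sF' with hc | hc | hc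
      · exact absurd ((hms r hc).symm.trans (hms' r hc)) hd
      · have hgh2 : g sF' = h' sF' := by
          cases hf : f sF' <;> cases hg : g sF' <;> cases hh : h' sF' <;> simp_all
        rw [hc] at hd
        exact absurd hgh2 hd
      · exact hc
    omega

/-- first-diff/comparison data for a "cross" pair. -/
lemma cross_block {f x y : Fin N → Bool} {F G : ℕ}
    (hF : firstDiffIdx f x = F) (hG : firstDiffIdx f y = G) (hFG : F < G) :
    x ≠ y ∧ firstDiffIdx x y = (if F = 0 then G else F) ∧
    (strToNat x < strToNat y ↔
      (if F = 0 then bitAt f (G-1) = false else bitAt f (F-1) = true)) := by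
  cases F with
  | zero =>
    have hfx : f = x := fdi_eq_zero_iff.mp hF
    subst hfx
    have hG1 : G - 1 + 1 = G := by omega
    obtain ⟨tF, htv, hdt, hmt⟩ := fdi_elim (s := G - 1) (by rw [hG, hG1])
    have hne : f ≠ y := by intro e; exact hdt (by rw [e])
    refine ⟨hne, by simp [hG], ?_⟩
    rw [if_pos rfl, ← htv, bitAt_fin]
    exact strToNat_lt_iff_of tF hmt hdt
  | succ s =>
    obtain ⟨sF, hsv, hds, hms⟩ := fdi_elim hF
    have hG1 : G - 1 + 1 = G := by omega
    obtain ⟨tF, htv, hdt, hmt⟩ := fdi_elim (s := G - 1) (by rw [hG, hG1])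
    have hst : sF < tF := by
      rw [Fin.lt_def, hsv, htv]
      omega
    have hysF : y sF = f sF := (hmt sF hst).symm
    have hagree : ∀ j : Fin N, j < sF → x j = y j := fun j hj =>
      (hms j hj).symm.trans (hmt j (hj.trans hst))
    have hdxy : x sF ≠ y sF := by rw [hysF]; exact fun e => hds e.symm
    refine ⟨fun e => hdxy (by rw [e]), ?_, ?_⟩
    · rw [if_neg (by omega), fdi_eq_succ_of sF hdxy hagree, hsv]
    · rw [if_neg (by omega), strToNat_lt_iff_of sF hagree hdxy]
      have : (s + 1 - 1 : ℕ) = sF.val := by omega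
      rw [this, bitAt_fin]
      exact bool_ne_iff (fun e => hds e.symm)

/-- structure extracted from a monochromatic path centered at `v`. -/
lemma path_pair {v u w : Vtx m} (hvu : v ≠ u) (hvw : v ≠ w) (huw : u ≠ w)
    (hc : phi v u = phi v w) :
    ∃ i : Fin m, firstDiffBlock v u = i.val ∧ firstDiffBlock v w = i.val ∧
      v i ≠ u i ∧ v i ≠ w i ∧ u i = w i ∧
      (∀ k : Fin m, k < i → v k = u k ∧ v k = w k) ∧
      (∀ k, firstDiffIdx (v k) (u k) = firstDiffIdx (v k) (w k)) ∧
      i.val < firstDiffBlock u w := by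
  obtain ⟨hfdb, hpair, hidx, _⟩ := phi_eq_elim hvu hvw hc
  obtain ⟨i, hiv, hdu, hmu⟩ := fdb_spec hvu
  have hjv : firstDiffBlock v w = i.val := by rw [← hfdb, hiv]
  obtain ⟨j, hjv', hdw, hmw⟩ := fdb_spec hvw
  have hij : j = i := Fin.val_injective (by rw [← hjv', hjv])
  subst hij
  rw [hiv, hjv] at hpair
  simp only [blockAt_fin] at hpair
  have huw_i : u j = w j := by
    rcases pair_eq_split hdu hpair with ⟨_, h2⟩ | ⟨h1, _⟩
    · exact h2
    · exact absurd h1 hdw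
  refine ⟨j, hiv, hjv, hdu, hdw, huw_i, fun k hk => ⟨hmu k hk, hmw k hk⟩, hidx, ?_⟩
  apply fdb_gt_of j huw
  intro k hk
  rcases lt_or_eq_of_le hk with hk' | hk'
  · exact (hmu k hk').symm.trans (hmw k hk')
  · rw [show k = j from hk']
    exact huw_i

lemma KILL {x y z w : Vtx m} (hxy : x ≠ y) (hzw : z ≠ w) (κ t : Fin m)
    (hd1 : dval x y κ = dval z w κ) (hd2 : dval x y t = dval z w t)
    (σ : Prop)
    (ha1 : strToNat (x κ) ≠ strToNat (y κ)) (ha1' : strToNat (x κ) < strToNat (y κ) ↔ σ)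
    (ha2 : strToNat (z κ) ≠ strToNat (w κ)) (ha2' : strToNat (z κ) < strToNat (w κ) ↔ σ)
    (hb1 : x t = w t) (hb2 : y t = z t) (hbne : x t ≠ y t) : False := by
  have hAB : strToNat (x t) ≠ strToNat (y t) := fun e => hbne (strToNat_inj e)
  have hCD : strToNat (z t) ≠ strToNat (w t) := by
    rw [← hb1, ← hb2]
    exact fun e => hbne (strToNat_inj e).symm
  have e1 := ((dval_one_iff κ ha1).symm.trans
    ((dval_eq_one_iff_of_eq hd1).trans (dval_one_iff κ ha2)))
  have e2 := ((dval_one_iff t hAB).symm.trans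
    ((dval_eq_one_iff_of_eq hd2).trans (dval_one_iff t hCD)))
  rw [ha1', ha2'] at e1
  have hzt : strToNat (z t) = strToNat (y t) := by rw [hb2]
  have hwt : strToNat (w t) = strToNat (x t) := by rw [hb1]
  rw [hzt, hwt] at e2
  have hPQ : (vtxToNat x ≤ vtxToNat y) ↔ (vtxToNat z ≤ vtxToNat w) := by
    by_cases hs : σ
    · simp only [iff_true_intro hs, iff_true] at e1
      exact e1
    · simp only [iff_false_intro hs, iff_false, not_iff_not] at e1
      exact e1
  rcases lt_or_gt_of_ne hAB with hlt | hlt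
  · have h2 : ¬ strToNat (y t) < strToNat (x t) := by omega
    simp only [iff_true_intro hlt, iff_true, iff_false_intro h2, iff_false] at e2
    by_cases hP : vtxToNat x ≤ vtxToNat y
    · exact (e2.mp hP) (hPQ.mp hP)
    · exact hP (e2.mpr (fun hQ => hP (hPQ.mpr hQ)))
  · have h2 : ¬ strToNat (x t) < strToNat (y t) := by omega
    simp only [iff_false_intro h2, iff_false, iff_true_intro hlt, iff_true] at e2
    by_cases hQ : vtxToNat z ≤ vtxToNat w
    · exact (e2.mpr hQ) (hPQ.mpr hQ)
    · exact hQ (e2.mp (fun hP => hQ (hPQ.mp hP)))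

end Aux3


section Counting

variable {m : ℕ} {a b c d e : Vtx m}

lemma sym2_ne {α : Type*} {x y z w : α} (h : ¬((x = z ∧ y = w) ∨ (x = w ∧ y = z))) :
    s(x,y) ≠ s(z,w) := by
  rw [Ne, Sym2.eq_iff]
  exact h

lemma sym2_ne_aux {α : Type*} {a b c d : α} (h1 : a ≠ c ∨ b ≠ d) (h2 : a ≠ d ∨ b ≠ c) :
    s(a,b) ≠ s(c,d) := by
  rw [Ne, Sym2.eq_iff]
  rintro (⟨e1, e2⟩ | ⟨e1, e2⟩)
  · rcases h1 with h | h
    exacts [h e1, h e2]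
  · rcases h2 with h | h
    exacts [h e1, h e2]

lemma phi_sym2 {x y z w : Vtx m} (h : s(x,y) = s(z,w)) : phi x y = phi z w := by
  rw [Sym2.eq_iff] at h
  rcases h with ⟨rfl, rfl⟩ | ⟨rfl, rfl⟩
  · rfl
  · exact phi_comm x y

lemma edgeList_nodup (hd : Distinct5 a b c d e) : (edgeList a b c d e).Nodup := by
  obtain ⟨h1,h2,h3,h4,h5,h6,h7,h8,h9,h10⟩ := hd
  simp [edgeList, Prod.ext_iff]
  tauto

lemma mem_edgeList_vtx {p : Vtx m × Vtx m} (hp : p ∈ edgeList a b c d e) :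
    p.1 ∈ ({a,b,c,d,e} : Set (Vtx m)) ∧ p.2 ∈ ({a,b,c,d,e} : Set (Vtx m)) := by
  simp only [edgeList, List.mem_cons, List.mem_singleton, List.not_mem_nil, or_false] at hp
  rcases hp with rfl|rfl|rfl|rfl|rfl|rfl|rfl|rfl|rfl|rfl <;> constructor <;> simp

lemma mem_edgeList_ne (hd : Distinct5 a b c d e) {p : Vtx m × Vtx m}
    (hp : p ∈ edgeList a b c d e) : p.1 ≠ p.2 := by
  obtain ⟨h1,h2,h3,h4,h5,h6,h7,h8,h9,h10⟩ := hd
  simp only [edgeList, List.mem_cons, List.mem_singleton, List.not_mem_nil, or_false] at hp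
  rcases hp with rfl|rfl|rfl|rfl|rfl|rfl|rfl|rfl|rfl|rfl <;> assumption

lemma exists_edge {x y : Vtx m}
    (hx : x ∈ ({a,b,c,d,e} : Set (Vtx m))) (hy : y ∈ ({a,b,c,d,e} : Set (Vtx m)))
    (hxy : x ≠ y) : ∃ p ∈ edgeList a b c d e, s(p.1, p.2) = s(x, y) := by
  simp only [Set.mem_insert_iff, Set.mem_singleton_iff] at hx hy
  rcases hx with rfl|rfl|rfl|rfl|rfl <;> rcases hy with rfl|rfl|rfl|rfl|rfl <;>
    first
      | exact absurd rfl hxy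
      | (refine ⟨(x, y), ?_, rfl⟩; simp [edgeList]; done)
      | (refine ⟨(y, x), ?_, Sym2.eq_swap⟩; simp [edgeList]; done)

lemma edgeList_sym2_inj (hd : Distinct5 a b c d e) {p p' : Vtx m × Vtx m}
    (hp : p ∈ edgeList a b c d e) (hp' : p' ∈ edgeList a b c d e)
    (hs : s(p.1, p.2) = s(p'.1, p'.2)) : p = p' := by
  obtain ⟨h1,h2,h3,h4,h5,h6,h7,h8,h9,h10⟩ := hd
  simp only [edgeList, List.mem_cons, List.mem_singleton, List.not_mem_nil, or_false]
    at hp hp'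
  rcases hp with rfl|rfl|rfl|rfl|rfl|rfl|rfl|rfl|rfl|rfl <;>
    rcases hp' with rfl|rfl|rfl|rfl|rfl|rfl|rfl|rfl|rfl|rfl <;>
    simp_all [Sym2.eq_iff] <;> tauto

lemma colorCount_eq_length (col : Color m) :
    colorCount a b c d e col =
      ((edgeList a b c d e).filter
        (fun p => @decide (phi p.1 p.2 = col) (Classical.propDecidable _))).length := by
  unfold colorCount
  rw [List.countP_map, List.countP_eq_length_filter]
  rfl

lemma mem_color_filter {col : Color m} {p : Vtx m × Vtx m} :
    p ∈ (edgeList a b c d e).filter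
        (fun p => @decide (phi p.1 p.2 = col) (Classical.propDecidable _)) ↔
      p ∈ edgeList a b c d e ∧ phi p.1 p.2 = col := by
  rw [List.mem_filter]
  simp only [decide_eq_true_eq]

lemma no_three (h : IsConfig22222 a b c d e) {p1 p2 p3 : Vtx m × Vtx m}
    (h1 : p1 ∈ edgeList a b c d e) (h2 : p2 ∈ edgeList a b c d e)
    (h3 : p3 ∈ edgeList a b c d e) (h12 : p1 ≠ p2) (h13 : p1 ≠ p3) (h23 : p2 ≠ p3)
    (hc12 : phi p1.1 p1.2 = phi p2.1 p2.2) (hc23 : phi p2.1 p2.2 = phi p3.1 p3.2) :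
    False := by
  set col := phi p1.1 p1.2 with hcol
  have hm1 : p1 ∈ (edgeList a b c d e).filter
      (fun p => @decide (phi p.1 p.2 = col) (Classical.propDecidable _)) :=
    mem_color_filter.mpr ⟨h1, rfl⟩
  have hm2 : p2 ∈ (edgeList a b c d e).filter
      (fun p => @decide (phi p.1 p.2 = col) (Classical.propDecidable _)) :=
    mem_color_filter.mpr ⟨h2, hc12.symm⟩
  have hm3 : p3 ∈ (edgeList a b c d e).filter
      (fun p => @decide (phi p.1 p.2 = col) (Classical.propDecidable _)) :=
    mem_color_filter.mpr ⟨h3, (hc12.trans hc23).symm⟩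
  have hnd : ([p1, p2, p3] : List (Vtx m × Vtx m)).Nodup := by
    simp [h12, h13, h23]
  have hsub : ([p1, p2, p3] : List (Vtx m × Vtx m)) ⊆
      (edgeList a b c d e).filter
        (fun p => @decide (phi p.1 p.2 = col) (Classical.propDecidable _)) := by
    intro x hx
    simp only [List.mem_cons, List.mem_singleton, List.not_mem_nil, or_false] at hx
    rcases hx with rfl | rfl | rfl
    · exact hm1
    · exact hm2
    · exact hm3
  have hsp := List.subperm_of_subset hnd hsub
  have hlen := hsp.length_le
  simp only [List.length_cons, List.length_nil] at hlen
  rw [← colorCount_eq_length] at hlen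
  rcases h.2 col with hc | hc <;> omega

lemma mate_exists (h : IsConfig22222 a b c d e) {p : Vtx m × Vtx m}
    (hp : p ∈ edgeList a b c d e) :
    ∃ p' ∈ edgeList a b c d e, p' ≠ p ∧ phi p'.1 p'.2 = phi p.1 p.2 := by
  set col := phi p.1 p.2 with hcol
  set L := (edgeList a b c d e).filter
      (fun p => @decide (phi p.1 p.2 = col) (Classical.propDecidable _)) with hL
  have hm : p ∈ L := mem_color_filter.mpr ⟨hp, rfl⟩
  have hlen : L.length = 2 := by
    rcases h.2 col with hc | hc
    · rw [colorCount_eq_length] at hc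
      rw [← hL] at hc
      exact absurd hm (by rw [List.length_eq_zero_iff.mp hc]; simp)
    · rw [colorCount_eq_length] at hc
      rw [← hL] at hc
      exact hc
  obtain ⟨q1, q2, hq⟩ := List.length_eq_two.mp hlen
  have hnd : L.Nodup := List.Nodup.filter _ (edgeList_nodup h.1)
  have hq12 : q1 ≠ q2 := by
    rw [hq] at hnd
    simpa using hnd
  rw [hq] at hm
  simp only [List.mem_cons, List.mem_singleton, List.not_mem_nil, or_false] at hm
  rcases hm with rfl | rfl
  · have hq2 : q2 ∈ L := by rw [hq]; simp
    rw [mem_color_filter] at hq2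
    exact ⟨q2, hq2.1, fun e => hq12 e.symm, hq2.2⟩
  · have hq1 : q1 ∈ L := by rw [hq]; simp
    rw [mem_color_filter] at hq1
    exact ⟨q1, hq1.1, hq12, hq1.2⟩

lemma mateS (h : IsConfig22222 a b c d e) :
    ∀ x ∈ ({a,b,c,d,e} : Set (Vtx m)), ∀ y ∈ ({a,b,c,d,e} : Set (Vtx m)), x ≠ y →
      ∃ x' ∈ ({a,b,c,d,e} : Set (Vtx m)), ∃ y' ∈ ({a,b,c,d,e} : Set (Vtx m)),
        x' ≠ y' ∧ s(x',y') ≠ s(x,y) ∧ phi x' y' = phi x y := by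
  intro x hx y hy hxy
  obtain ⟨p, hp, hps⟩ := exists_edge hx hy hxy
  obtain ⟨p', hp', hpp, hcolp⟩ := mate_exists h hp
  obtain ⟨hm1, hm2⟩ := mem_edgeList_vtx hp'
  refine ⟨p'.1, hm1, p'.2, hm2, mem_edgeList_ne h.1 hp', ?_, hcolp.trans (phi_sym2 hps)⟩
  intro hse
  exact hpp (edgeList_sym2_inj h.1 hp' hp (hse.trans hps.symm))

lemma no3S (h : IsConfig22222 a b c d e) :
    ∀ x y x' y' x'' y'' : Vtx m, x ≠ y → x' ≠ y' → x'' ≠ y'' →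
      x ∈ ({a,b,c,d,e} : Set (Vtx m)) → y ∈ ({a,b,c,d,e} : Set (Vtx m)) →
      x' ∈ ({a,b,c,d,e} : Set (Vtx m)) → y' ∈ ({a,b,c,d,e} : Set (Vtx m)) →
      x'' ∈ ({a,b,c,d,e} : Set (Vtx m)) → y'' ∈ ({a,b,c,d,e} : Set (Vtx m)) →
      s(x,y) ≠ s(x',y') → s(x,y) ≠ s(x'',y'') → s(x',y') ≠ s(x'',y'') →
      phi x y = phi x' y' → phi x' y' = phi x'' y'' → False := by
  intro x y x' y' x'' y'' hne1 hne2 hne3 hx hy hx' hy' hx'' hy'' hs1 hs2 hs3 hcol1 hcol2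
  obtain ⟨p1, hp1, hps1⟩ := exists_edge hx hy hne1
  obtain ⟨p2, hp2, hps2⟩ := exists_edge hx' hy' hne2
  obtain ⟨p3, hp3, hps3⟩ := exists_edge hx'' hy'' hne3
  apply no_three h hp1 hp2 hp3
  · intro hp12; exact hs1 (hps1.symm.trans (hp12 ▸ hps2))
  · intro hp13; exact hs2 (hps1.symm.trans (hp13 ▸ hps3))
  · intro hp23; exact hs3 (hps2.symm.trans (hp23 ▸ hps3))
  · exact (phi_sym2 hps1).trans (hcol1.trans (phi_sym2 hps2).symm)
  · exact (phi_sym2 hps2).trans (hcol2.trans (phi_sym2 hps3).symm)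

end Counting


section Aux5

variable {N m : ℕ}

lemma cmp_iff_of_fdi_eq {f g g' : Fin N → Bool}
    (h : firstDiffIdx f g = firstDiffIdx f g') :
    ((strToNat f ≤ strToNat g) ↔ (strToNat f ≤ strToNat g')) ∧
    ((strToNat g ≤ strToNat f) ↔ (strToNat g' ≤ strToNat f)) := by
  by_cases hfg : f = g
  · have h0 : firstDiffIdx f g' = 0 := by rw [← h, fdi_eq_zero_iff.mpr hfg]
    have hfg' : f = g' := fdi_eq_zero_iff.mp h0
    rw [← hfg, ← hfg']
    exact ⟨Iff.rfl, Iff.rfl⟩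
  · obtain ⟨s, hsv, hd, hmin⟩ := fdi_spec hfg
    have h2 : firstDiffIdx f g' = s.val + 1 := by rw [← h, hsv]
    obtain ⟨s', hsv', hd', hmin'⟩ := fdi_elim h2
    have hss : s' = s := Fin.val_injective hsv'
    subst hss
    have e1 : strToNat f ≠ strToNat g := fun e => hd (by rw [strToNat_inj e])
    have e2 : strToNat f ≠ strToNat g' := fun e => hd' (by rw [strToNat_inj e])
    have l1 := strToNat_lt_iff_of s' hmin hd
    have l2 := strToNat_lt_iff_of s' hmin' hd'
    have l1' := strToNat_lt_iff_of (f := g) (g := f) s'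
      (fun j hj => (hmin j hj).symm) (fun e => hd e.symm)
    have l2' := strToNat_lt_iff_of (f := g') (g := f) s'
      (fun j hj => (hmin' j hj).symm) (fun e => hd' e.symm)
    have hgg : (g s' = false) ↔ (g' s' = false) := by
      cases hv : f s' <;> cases hv2 : g s' <;> cases hv3 : g' s' <;> simp_all
    constructor
    · constructor
      · intro hle
        exact le_of_lt (l2.mpr (l1.mp (lt_of_le_of_ne hle e1)))
      · intro hle
        exact le_of_lt (l1.mpr (l2.mp (lt_of_le_of_ne hle e2)))
    · constructor
      · intro hle
        exact le_of_lt (l2'.mpr (hgg.mp (l1'.mp (lt_of_le_of_ne hle (Ne.symm e1)))))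
      · intro hle
        exact le_of_lt (l1'.mpr (hgg.mpr (l2'.mp (lt_of_le_of_ne hle (Ne.symm e2)))))

/-- if the bitwise first-difference data of `(v,u)` and `(v,p)` agree everywhere and
the blocks at the common first difference block agree, the colors agree. -/
lemma NEQ {v u p : Vtx m} (hvu : v ≠ u) (hvp : v ≠ p) (i : Fin m)
    (hfu : firstDiffBlock v u = i.val) (hfp : firstDiffBlock v p = i.val)
    (hblk : u i = p i)
    (hall : ∀ k, firstDiffIdx (v k) (u k) = firstDiffIdx (v k) (p k)) :
    phi v u = phi v p := by
  have hvui := vtx_lt_iff hvu i hfu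
  have hvpi := vtx_lt_iff hvp i hfp
  have hor : vtxToNat v < vtxToNat u ↔ vtxToNat v < vtxToNat p := by
    rw [hvui, hvpi, hblk]
  have c1 : (fun k => firstDiffIdx (v k) (u k)) = (fun k => firstDiffIdx (v k) (p k)) :=
    funext hall
  have c1' : (fun k => firstDiffIdx (u k) (v k)) = (fun k => firstDiffIdx (p k) (v k)) := by
    funext k
    rw [fdi_comm, hall k, fdi_comm]
  have c2 : (fun k => if strToNat (v k) ≤ strToNat (u k) then (1:ℤ) else -1)
      = (fun k => if strToNat (v k) ≤ strToNat (p k) then (1:ℤ) else -1) := by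
    funext k
    have hiff := (cmp_iff_of_fdi_eq (hall k)).1
    by_cases hc : strToNat (v k) ≤ strToNat (u k)
    · rw [if_pos hc, if_pos (hiff.mp hc)]
    · rw [if_neg hc, if_neg (fun hc2 => hc (hiff.mpr hc2))]
  have c2' : (fun k => if strToNat (u k) ≤ strToNat (v k) then (1:ℤ) else -1)
      = (fun k => if strToNat (p k) ≤ strToNat (v k) then (1:ℤ) else -1) := by
    funext k
    have hiff := (cmp_iff_of_fdi_eq (hall k)).2
    by_cases hc : strToNat (u k) ≤ strToNat (v k)
    · rw [if_pos hc, if_pos (hiff.mp hc)]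
    · rw [if_neg hc, if_neg (fun hc2 => hc (hiff.mpr hc2))]
  have hAux1 : phiAux v u = phiAux v p := by
    unfold phiAux
    rw [hfu, hfp, c1, c2]
    simp only [blockAt_fin]
    rw [hblk]
  have hAux2 : phiAux u v = phiAux p v := by
    unfold phiAux
    rw [fdb_comm u v, fdb_comm p v, hfu, hfp, c1', c2']
    simp only [blockAt_fin]
    rw [hblk]
  unfold phi
  rcases vtx_lt_or hvu with hlt | hlt
  · rw [if_pos (le_of_lt hlt), if_pos (le_of_lt (hor.mp hlt)), hAux1]
  · have hltp : vtxToNat p < vtxToNat v := by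
      rcases vtx_lt_or hvp with hc | hc
      · exact absurd (hor.mpr hc) (by omega)
      · exact hc
    rw [if_neg (by omega), if_neg (by omega), hAux2]

end Aux5


section MainArg

variable {m : ℕ}

lemma CORE {v u w p q : Vtx m} {S : Set (Vtx m)}
    (hS : S = {v, u, w, p, q})
    (hvu : v ≠ u) (hvw : v ≠ w) (hvp : v ≠ p) (hvq : v ≠ q)
    (huw : u ≠ w) (hup : u ≠ p) (huq : u ≠ q) (hwp : w ≠ p) (hwq : w ≠ q) (hpq : p ≠ q)
    (hmate : ∀ x ∈ S, ∀ y ∈ S, x ≠ y → ∃ x' ∈ S, ∃ y' ∈ S,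
        x' ≠ y' ∧ s(x',y') ≠ s(x,y) ∧ phi x' y' = phi x y)
    (hno3 : ∀ x y x' y' x'' y'' : Vtx m, x ≠ y → x' ≠ y' → x'' ≠ y'' →
        x ∈ S → y ∈ S → x' ∈ S → y' ∈ S → x'' ∈ S → y'' ∈ S →
        s(x,y) ≠ s(x',y') → s(x,y) ≠ s(x'',y'') → s(x',y') ≠ s(x'',y'') →
        phi x y = phi x' y' → phi x' y' = phi x'' y'' → False)
    (hc1 : phi v u = phi v w) (hc2 : phi v p = phi v q)
    (hB : ∀ x y : Vtx m, (x = u ∨ x = w) → (y = p ∨ y = q) →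
        phi x y ≠ phi u w ∧ phi x y ≠ phi p q)
    (κ : Fin m) (σ : Prop)
    (hal : ∀ x y : Vtx m, (x = u ∨ x = w) → (y = p ∨ y = q) →
        strToNat (x κ) ≠ strToNat (y κ) ∧ (strToNat (x κ) < strToNat (y κ) ↔ σ)) :
    False := by
  have nvu := hvu.symm
  have nvw := hvw.symm
  have nvp := hvp.symm
  have nvq := hvq.symm
  have nuw := huw.symm
  have nup := hup.symm
  have nuq := huq.symm
  have nwp := hwp.symm
  have nwq := hwq.symm
  have npq := hpq.symm
  have mv : v ∈ S := by rw [hS]; simp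
  have mu : u ∈ S := by rw [hS]; simp
  have mw : w ∈ S := by rw [hS]; simp
  have mp' : p ∈ S := by rw [hS]; simp
  have mq : q ∈ S := by rw [hS]; simp
  have sVUvw : s(v,u) ≠ s(v,w) := sym2_ne_aux (Or.inr huw) (Or.inl hvw)
  have sVPvq : s(v,p) ≠ s(v,q) := sym2_ne_aux (Or.inr hpq) (Or.inl hvq)
  have sUWvu : s(u,w) ≠ s(v,u) := sym2_ne_aux (Or.inl nvu) (Or.inr nvw)
  have sUWvw : s(u,w) ≠ s(v,w) := sym2_ne_aux (Or.inl nvu) (Or.inl huw)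
  have sUWvp : s(u,w) ≠ s(v,p) := sym2_ne_aux (Or.inl nvu) (Or.inl hup)
  have sUWvq : s(u,w) ≠ s(v,q) := sym2_ne_aux (Or.inl nvu) (Or.inl huq)
  have sUPvu : s(u,p) ≠ s(v,u) := sym2_ne_aux (Or.inl nvu) (Or.inr nvp)
  have sUPvw : s(u,p) ≠ s(v,w) := sym2_ne_aux (Or.inl nvu) (Or.inl huw)
  have sUPvp : s(u,p) ≠ s(v,p) := sym2_ne_aux (Or.inl nvu) (Or.inl hup)
  have sUPvq : s(u,p) ≠ s(v,q) := sym2_ne_aux (Or.inl nvu) (Or.inl huq)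
  have sUQvu : s(u,q) ≠ s(v,u) := sym2_ne_aux (Or.inl nvu) (Or.inr nvq)
  have sUQvw : s(u,q) ≠ s(v,w) := sym2_ne_aux (Or.inl nvu) (Or.inl huw)
  have sUQvp : s(u,q) ≠ s(v,p) := sym2_ne_aux (Or.inl nvu) (Or.inl hup)
  have sUQvq : s(u,q) ≠ s(v,q) := sym2_ne_aux (Or.inl nvu) (Or.inl huq)
  have sUPwq : s(u,p) ≠ s(w,q) := sym2_ne_aux (Or.inl huw) (Or.inl huq)
  have sUPuq : s(u,p) ≠ s(u,q) := sym2_ne_aux (Or.inr hpq) (Or.inl huq)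
  have sWQuq : s(w,q) ≠ s(u,q) := sym2_ne_aux (Or.inl nuw) (Or.inl hwq)
  have KC : ∀ n : Vtx m, (n = u ∨ n = w ∨ n = p ∨ n = q) → ∀ X Y : Vtx m,
      X ∈ S → Y ∈ S → X ≠ Y →
      s(X,Y) ≠ s(v,u) → s(X,Y) ≠ s(v,w) → s(X,Y) ≠ s(v,p) → s(X,Y) ≠ s(v,q) →
      phi X Y = phi v n → False := by
    intro n hn X Y hX hY hXY k1 k2 k3 k4 hcol
    rcases hn with rfl | rfl | rfl | rfl
    · exact hno3 v n v w X Y hvu hvw hXY mv mu mv mw hX hY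
        sVUvw (Ne.symm k1) (Ne.symm k2) hc1 (hc1.symm.trans hcol.symm)
    · exact hno3 v u v n X Y hvu hvw hXY mv mu mv mw hX hY
        sVUvw (Ne.symm k1) (Ne.symm k2) hc1 hcol.symm
    · exact hno3 v n v q X Y hvp hvq hXY mv mp' mv mq hX hY
        sVPvq (Ne.symm k3) (Ne.symm k4) hc2 (hc2.symm.trans hcol.symm)
    · exact hno3 v p v n X Y hvp hvq hXY mv mp' mv mq hX hY
        sVPvq (Ne.symm k3) (Ne.symm k4) hc2 hcol.symm
  -- Step A : the mate of the edge uw is the edge pq.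
  have hApq : phi u w = phi p q := by
    obtain ⟨x1, hx1S, y1, hy1S, hxy1, hs1, hcolA⟩ := hmate u mu w mw huw
    rw [hS] at hx1S hy1S
    simp only [Set.mem_insert_iff, Set.mem_singleton_iff] at hx1S hy1S
    rcases hx1S with h1|h1|h1|h1|h1 <;> rcases hy1S with h2|h2|h2|h2|h2 <;>
      rw [h1, h2] at hxy1 hs1 hcolA
    · exact absurd rfl hxy1
    · exact (KC u (Or.inl rfl) u w mu mw huw sUWvu sUWvw sUWvp sUWvq hcolA.symm).elim
    · exact (KC w (Or.inr (Or.inl rfl)) u w mu mw huw sUWvu sUWvw sUWvp sUWvq hcolA.symm).elim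
    · exact (KC p (Or.inr (Or.inr (Or.inl rfl))) u w mu mw huw sUWvu sUWvw sUWvp sUWvq hcolA.symm).elim
    · exact (KC q (Or.inr (Or.inr (Or.inr rfl))) u w mu mw huw sUWvu sUWvw sUWvp sUWvq hcolA.symm).elim
    · exact (KC u (Or.inl rfl) u w mu mw huw sUWvu sUWvw sUWvp sUWvq (hcolA.symm.trans (phi_comm u v))).elim
    · exact absurd rfl hxy1
    · exact absurd rfl hs1
    · exact absurd hcolA (hB u p (Or.inl rfl) (Or.inl rfl)).1
    · exact absurd hcolA (hB u q (Or.inl rfl) (Or.inr rfl)).1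
    · exact (KC w (Or.inr (Or.inl rfl)) u w mu mw huw sUWvu sUWvw sUWvp sUWvq (hcolA.symm.trans (phi_comm w v))).elim
    · exact absurd Sym2.eq_swap hs1
    · exact absurd rfl hxy1
    · exact absurd hcolA (hB w p (Or.inr rfl) (Or.inl rfl)).1
    · exact absurd hcolA (hB w q (Or.inr rfl) (Or.inr rfl)).1
    · exact (KC p (Or.inr (Or.inr (Or.inl rfl))) u w mu mw huw sUWvu sUWvw sUWvp sUWvq (hcolA.symm.trans (phi_comm p v))).elim
    · exact absurd ((phi_comm u p).trans hcolA) (hB u p (Or.inl rfl) (Or.inl rfl)).1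
    · exact absurd ((phi_comm w p).trans hcolA) (hB w p (Or.inr rfl) (Or.inl rfl)).1
    · exact absurd rfl hxy1
    · exact hcolA.symm
    · exact (KC q (Or.inr (Or.inr (Or.inr rfl))) u w mu mw huw sUWvu sUWvw sUWvp sUWvq (hcolA.symm.trans (phi_comm q v))).elim
    · exact absurd ((phi_comm u q).trans hcolA) (hB u q (Or.inl rfl) (Or.inr rfl)).1
    · exact absurd ((phi_comm w q).trans hcolA) (hB w q (Or.inr rfl) (Or.inr rfl)).1
    · exact hcolA.symm.trans (phi_comm q p)
    · exact absurd rfl hxy1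
  -- Step B : the mate of the edge up is one of uq, wp, wq.
  have hD : phi u p = phi u q ∨ phi u p = phi w p ∨ phi u p = phi w q := by
    obtain ⟨x1, hx1S, y1, hy1S, hxy1, hs1, hcolA⟩ := hmate u mu p mp' hup
    rw [hS] at hx1S hy1S
    simp only [Set.mem_insert_iff, Set.mem_singleton_iff] at hx1S hy1S
    rcases hx1S with h1|h1|h1|h1|h1 <;> rcases hy1S with h2|h2|h2|h2|h2 <;>
      rw [h1, h2] at hxy1 hs1 hcolA
    · exact absurd rfl hxy1
    · exact (KC u (Or.inl rfl) u p mu mp' hup sUPvu sUPvw sUPvp sUPvq hcolA.symm).elim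
    · exact (KC w (Or.inr (Or.inl rfl)) u p mu mp' hup sUPvu sUPvw sUPvp sUPvq hcolA.symm).elim
    · exact (KC p (Or.inr (Or.inr (Or.inl rfl))) u p mu mp' hup sUPvu sUPvw sUPvp sUPvq hcolA.symm).elim
    · exact (KC q (Or.inr (Or.inr (Or.inr rfl))) u p mu mp' hup sUPvu sUPvw sUPvp sUPvq hcolA.symm).elim
    · exact (KC u (Or.inl rfl) u p mu mp' hup sUPvu sUPvw sUPvp sUPvq (hcolA.symm.trans (phi_comm u v))).elim
    · exact absurd rfl hxy1
    · exact absurd hcolA.symm (hB u p (Or.inl rfl) (Or.inl rfl)).1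
    · exact absurd rfl hs1
    · exact Or.inl hcolA.symm
    · exact (KC w (Or.inr (Or.inl rfl)) u p mu mp' hup sUPvu sUPvw sUPvp sUPvq (hcolA.symm.trans (phi_comm w v))).elim
    · exact absurd (hcolA.symm.trans (phi_comm w u)) (hB u p (Or.inl rfl) (Or.inl rfl)).1
    · exact absurd rfl hxy1
    · exact Or.inr (Or.inl hcolA.symm)
    · exact Or.inr (Or.inr hcolA.symm)
    · exact (KC p (Or.inr (Or.inr (Or.inl rfl))) u p mu mp' hup sUPvu sUPvw sUPvp sUPvq (hcolA.symm.trans (phi_comm p v))).elim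
    · exact absurd Sym2.eq_swap hs1
    · exact Or.inr (Or.inl (hcolA.symm.trans (phi_comm p w)))
    · exact absurd rfl hxy1
    · exact absurd hcolA.symm (hB u p (Or.inl rfl) (Or.inl rfl)).2
    · exact (KC q (Or.inr (Or.inr (Or.inr rfl))) u p mu mp' hup sUPvu sUPvw sUPvp sUPvq (hcolA.symm.trans (phi_comm q v))).elim
    · exact Or.inl (hcolA.symm.trans (phi_comm q u))
    · exact Or.inr (Or.inr (hcolA.symm.trans (phi_comm q w)))
    · exact absurd (hcolA.symm.trans (phi_comm q p)) (hB u p (Or.inl rfl) (Or.inl rfl)).2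
    · exact absurd rfl hxy1
  -- first-difference block of uw and pq
  obtain ⟨tF, htv, htdUW, _⟩ := fdb_spec huw
  obtain ⟨hfdb2, hpair2, hidx2, hdval2⟩ := phi_eq_elim huw hpq hApq
  have htPQv : firstDiffBlock p q = tF.val := by rw [← hfdb2, htv]
  obtain ⟨tF', htv', htdPQ0, _⟩ := fdb_spec hpq
  have htt : tF' = tF := Fin.val_injective (by rw [← htv']; exact htPQv)
  have htdPQ : p tF ≠ q tF := by rwa [htt] at htdPQ0
  rw [htv, htPQv] at hpair2
  simp only [blockAt_fin] at hpair2
  have hsplit := pair_eq_split htdUW hpair2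
  rcases hD with hD | hD | hD
  · -- mate of up is uq : impossible via the i_t coordinate
    have hi := (phi_eq_elim hup huq hD).2.2.1 tF
    rcases hsplit with ⟨h1, h2⟩ | ⟨h1, h2⟩
    · have h0 : firstDiffIdx (u tF) (q tF) = 0 := by
        rw [← hi, fdi_eq_zero_iff.mpr h1]
      exact htdUW ((fdi_eq_zero_iff.mp h0).trans h2.symm)
    · have h0 : firstDiffIdx (u tF) (p tF) = 0 := by
        rw [hi, fdi_eq_zero_iff.mpr h1]
      exact htdUW ((fdi_eq_zero_iff.mp h0).trans h2.symm)
  · -- mate of up is wp : impossible via the i_t coordinate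
    have hi := (phi_eq_elim hup hwp hD).2.2.1 tF
    rcases hsplit with ⟨h1, h2⟩ | ⟨h1, h2⟩
    · have h0 : firstDiffIdx (w tF) (p tF) = 0 := by
        rw [← hi, fdi_eq_zero_iff.mpr h1]
      exact htdUW (h1.trans (fdi_eq_zero_iff.mp h0).symm)
    · have h0 : firstDiffIdx (u tF) (p tF) = 0 := by
        rw [hi, fdi_eq_zero_iff.mpr h2]
      exact htdUW ((fdi_eq_zero_iff.mp h0).trans h2.symm)
  · -- mate of up is wq
    rcases hsplit with ⟨h1, h2⟩ | ⟨h1, h2⟩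
    · -- matched case : need the mate of uq, which must be wp
      have hE : phi u q = phi w p := by
        obtain ⟨x1, hx1S, y1, hy1S, hxy1, hs1, hcolA⟩ := hmate u mu q mq huq
        rw [hS] at hx1S hy1S
        simp only [Set.mem_insert_iff, Set.mem_singleton_iff] at hx1S hy1S
        rcases hx1S with h1'|h1'|h1'|h1'|h1' <;> rcases hy1S with h2'|h2'|h2'|h2'|h2' <;>
          rw [h1', h2'] at hxy1 hs1 hcolA
        · exact absurd rfl hxy1
        · exact (KC u (Or.inl rfl) u q mu mq huq sUQvu sUQvw sUQvp sUQvq hcolA.symm).elim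
        · exact (KC w (Or.inr (Or.inl rfl)) u q mu mq huq sUQvu sUQvw sUQvp sUQvq hcolA.symm).elim
        · exact (KC p (Or.inr (Or.inr (Or.inl rfl))) u q mu mq huq sUQvu sUQvw sUQvp sUQvq hcolA.symm).elim
        · exact (KC q (Or.inr (Or.inr (Or.inr rfl))) u q mu mq huq sUQvu sUQvw sUQvp sUQvq hcolA.symm).elim
        · exact (KC u (Or.inl rfl) u q mu mq huq sUQvu sUQvw sUQvp sUQvq (hcolA.symm.trans (phi_comm u v))).elim
        · exact absurd rfl hxy1
        · exact absurd hcolA.symm (hB u q (Or.inl rfl) (Or.inr rfl)).1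
        · exact (hno3 u p w q u q hup hwq huq mu mp' mw mq mu mq sUPwq sUPuq sWQuq hD (hD.symm.trans hcolA)).elim
        · exact absurd rfl hs1
        · exact (KC w (Or.inr (Or.inl rfl)) u q mu mq huq sUQvu sUQvw sUQvp sUQvq (hcolA.symm.trans (phi_comm w v))).elim
        · exact absurd (hcolA.symm.trans (phi_comm w u)) (hB u q (Or.inl rfl) (Or.inr rfl)).1
        · exact absurd rfl hxy1
        · exact hcolA.symm
        · exact (hno3 u p w q u q hup hwq huq mu mp' mw mq mu mq sUPwq sUPuq sWQuq hD hcolA).elim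
        · exact (KC p (Or.inr (Or.inr (Or.inl rfl))) u q mu mq huq sUQvu sUQvw sUQvp sUQvq (hcolA.symm.trans (phi_comm p v))).elim
        · exact (hno3 u p w q u q hup hwq huq mu mp' mw mq mu mq sUPwq sUPuq sWQuq hD (hD.symm.trans ((phi_comm u p).trans hcolA))).elim
        · exact hcolA.symm.trans (phi_comm p w)
        · exact absurd rfl hxy1
        · exact absurd hcolA.symm (hB u q (Or.inl rfl) (Or.inr rfl)).2
        · exact (KC q (Or.inr (Or.inr (Or.inr rfl))) u q mu mq huq sUQvu sUQvw sUQvp sUQvq (hcolA.symm.trans (phi_comm q v))).elim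
        · exact absurd Sym2.eq_swap hs1
        · exact (hno3 u p w q u q hup hwq huq mu mp' mw mq mu mq sUPwq sUPuq sWQuq hD ((phi_comm w q).trans hcolA)).elim
        · exact absurd (hcolA.symm.trans (phi_comm q p)) (hB u q (Or.inl rfl) (Or.inr rfl)).2
        · exact absurd rfl hxy1
      have hd1 := (phi_eq_elim huq hwp hE).2.2.2 κ
      have hd2 := (phi_eq_elim huq hwp hE).2.2.2 tF
      exact KILL huq hwp κ tF hd1 hd2 σ
        (hal u q (Or.inl rfl) (Or.inr rfl)).1 (hal u q (Or.inl rfl) (Or.inr rfl)).2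
        (hal w p (Or.inr rfl) (Or.inl rfl)).1 (hal w p (Or.inr rfl) (Or.inl rfl)).2
        h1 h2.symm (fun e => htdUW (e.trans h2.symm))
    · -- crossed case : kill directly on up, wq
      have hd1 := (phi_eq_elim hup hwq hD).2.2.2 κ
      have hd2 := (phi_eq_elim hup hwq hD).2.2.2 tF
      exact KILL hup hwq κ tF hd1 hd2 σ
        (hal u p (Or.inl rfl) (Or.inl rfl)).1 (hal u p (Or.inl rfl) (Or.inl rfl)).2
        (hal w q (Or.inr rfl) (Or.inr rfl)).1 (hal w q (Or.inr rfl) (Or.inr rfl)).2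
        h1 h2.symm (fun e => htdUW (e.trans h2.symm))



lemma COREI {v u w p q : Vtx m} {S : Set (Vtx m)}
    (hS : S = {v, u, w, p, q})
    (hvu : v ≠ u) (hvw : v ≠ w) (hvp : v ≠ p) (hvq : v ≠ q)
    (huw : u ≠ w) (hup : u ≠ p) (huq : u ≠ q) (hwp : w ≠ p) (hwq : w ≠ q) (hpq : p ≠ q)
    (hmate : ∀ x ∈ S, ∀ y ∈ S, x ≠ y → ∃ x' ∈ S, ∃ y' ∈ S,
        x' ≠ y' ∧ s(x',y') ≠ s(x,y) ∧ phi x' y' = phi x y)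
    (hno3 : ∀ x y x' y' x'' y'' : Vtx m, x ≠ y → x' ≠ y' → x'' ≠ y'' →
        x ∈ S → y ∈ S → x' ∈ S → y' ∈ S → x'' ∈ S → y'' ∈ S →
        s(x,y) ≠ s(x',y') → s(x,y) ≠ s(x'',y'') → s(x',y') ≠ s(x'',y'') →
        phi x y = phi x' y' → phi x' y' = phi x'' y'' → False)
    (hc1 : phi v u = phi v w) (hc2 : phi v p = phi v q)
    (κ : Fin m)
    (hlt : firstDiffIdx (v κ) (u κ) < firstDiffIdx (v κ) (p κ)) : False := by
  have hidx1 := (phi_eq_elim hvu hvw hc1).2.2.1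
  have hidx2 := (phi_eq_elim hvp hvq hc2).2.2.1
  have hcr : ∀ x y : Vtx m, (x = u ∨ x = w) → (y = p ∨ y = q) →
      (x κ ≠ y κ ∧
        firstDiffIdx (x κ) (y κ) =
          (if firstDiffIdx (v κ) (u κ) = 0 then firstDiffIdx (v κ) (p κ)
            else firstDiffIdx (v κ) (u κ)) ∧
        (strToNat (x κ) < strToNat (y κ) ↔
          (if firstDiffIdx (v κ) (u κ) = 0
            then bitAt (v κ) (firstDiffIdx (v κ) (p κ) - 1) = false
            else bitAt (v κ) (firstDiffIdx (v κ) (u κ) - 1) = true))) := by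
    intro x y hx hy
    have hFx : firstDiffIdx (v κ) (x κ) = firstDiffIdx (v κ) (u κ) := by
      rcases hx with rfl | rfl
      · rfl
      · exact (hidx1 κ).symm
    have hGy : firstDiffIdx (v κ) (y κ) = firstDiffIdx (v κ) (p κ) := by
      rcases hy with rfl | rfl
      · rfl
      · exact (hidx2 κ).symm
    exact cross_block hFx hGy (by omega)
  have hB : ∀ x y : Vtx m, (x = u ∨ x = w) → (y = p ∨ y = q) →
      phi x y ≠ phi u w ∧ phi x y ≠ phi p q := by
    intro x y hx hy
    have hxy : x ≠ y := by
      rcases hx with rfl | rfl <;> rcases hy with rfl | rfl <;> assumption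
    have hcrd := (hcr x y hx hy).2.1
    constructor
    · intro he
      have hi := (phi_eq_elim hxy huw he).2.2.1 κ
      rw [hcrd] at hi
      have hbet := fdi_between rfl (hidx1 κ).symm
      by_cases hF0 : firstDiffIdx (v κ) (u κ) = 0
      · have hu0 : v κ = u κ := fdi_eq_zero_iff.mp hF0
        have hw0 : v κ = w κ := fdi_eq_zero_iff.mp (by rw [← hidx1 κ]; exact hF0)
        have h00 : firstDiffIdx (u κ) (w κ) = 0 :=
          fdi_eq_zero_iff.mpr (hu0.symm.trans hw0)
        rw [if_pos hF0, h00] at hi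
        omega
      · rw [if_neg hF0] at hi
        rcases hbet with hb0 | hbgt <;> omega
    · intro he
      have hi := (phi_eq_elim hxy hpq he).2.2.1 κ
      rw [hcrd] at hi
      have hbet := fdi_between rfl (hidx2 κ).symm
      by_cases hF0 : firstDiffIdx (v κ) (u κ) = 0
      · rw [if_pos hF0] at hi
        rcases hbet with hb0 | hbgt <;> omega
      · rw [if_neg hF0] at hi
        rcases hbet with hb0 | hbgt <;> omega
  exact CORE hS hvu hvw hvp hvq huw hup huq hwp hwq hpq hmate hno3 hc1 hc2 hB κ _
    (fun x y hx hy => ⟨fun e => (hcr x y hx hy).1 (strToNat_inj e), (hcr x y hx hy).2.2⟩)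

lemma COREII {v u w p q : Vtx m} {S : Set (Vtx m)}
    (hS : S = {v, u, w, p, q})
    (hvu : v ≠ u) (hvw : v ≠ w) (hvp : v ≠ p) (hvq : v ≠ q)
    (huw : u ≠ w) (hup : u ≠ p) (huq : u ≠ q) (hwp : w ≠ p) (hwq : w ≠ q) (hpq : p ≠ q)
    (hmate : ∀ x ∈ S, ∀ y ∈ S, x ≠ y → ∃ x' ∈ S, ∃ y' ∈ S,
        x' ≠ y' ∧ s(x',y') ≠ s(x,y) ∧ phi x' y' = phi x y)
    (hno3 : ∀ x y x' y' x'' y'' : Vtx m, x ≠ y → x' ≠ y' → x'' ≠ y'' →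
        x ∈ S → y ∈ S → x' ∈ S → y' ∈ S → x'' ∈ S → y'' ∈ S →
        s(x,y) ≠ s(x',y') → s(x,y) ≠ s(x'',y'') → s(x',y') ≠ s(x'',y'') →
        phi x y = phi x' y' → phi x' y' = phi x'' y'' → False)
    (hc1 : phi v u = phi v w) (hc2 : phi v p = phi v q) (hcc : phi v u ≠ phi v p)
    (hall : ∀ k, firstDiffIdx (v k) (u k) = firstDiffIdx (v k) (p k)) : False := by
  obtain ⟨i, hfu, hfw, hdvu, hdvw, hbuw, hbelow1, hidx1, htuw⟩ := path_pair hvu hvw huw hc1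
  obtain ⟨i2, hfp0, hfq0, hdvp0, hdvq0, hbpq0, hbelow20, hidx2, htpq0⟩ :=
    path_pair hvp hvq hpq hc2
  have hfp' : firstDiffBlock v p = i.val := by
    apply fdb_eq_of i
    · have hnz : firstDiffIdx (v i) (p i) ≠ 0 := by
        rw [← hall i]
        exact fun h0 => hdvu (fdi_eq_zero_iff.mp h0)
      exact fun e => hnz (fdi_eq_zero_iff.mpr e)
    · intro k hk
      have h0 : firstDiffIdx (v k) (p k) = 0 := by
        rw [← hall k, fdi_eq_zero_iff.mpr (hbelow1 k hk).1]
      exact fdi_eq_zero_iff.mp h0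
  have hii : i2 = i := Fin.val_injective (by rw [← hfp0]; exact hfp')
  rw [hii] at hfp0 hfq0 hdvp0 hdvq0 hbpq0 htpq0
  have hbelow2 : ∀ k : Fin m, k < i → v k = p k ∧ v k = q k := by
    intro k hk
    exact hbelow20 k (by rw [hii]; exact hk)
  have hbup : u i ≠ p i := by
    intro he
    exact hcc (NEQ hvu hvp i hfu hfp' he hall)
  have hcross_fdb : ∀ x y : Vtx m, (x = u ∨ x = w) → (y = p ∨ y = q) →
      firstDiffBlock x y = i.val := by
    intro x y hx hy
    apply fdb_eq_of i
    · have hxi : x i = u i := by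
        rcases hx with rfl | rfl
        · rfl
        · exact hbuw.symm
      have hyi : y i = p i := by
        rcases hy with rfl | rfl
        · rfl
        · exact hbpq0.symm
      rw [hxi, hyi]
      exact hbup
    · intro k hk
      have hx1 : x k = v k := by
        rcases hx with rfl | rfl
        exacts [(hbelow1 k hk).1.symm, (hbelow1 k hk).2.symm]
      have hy1 : y k = v k := by
        rcases hy with rfl | rfl
        exacts [(hbelow2 k hk).1.symm, (hbelow2 k hk).2.symm]
      rw [hx1, hy1]
  have hB : ∀ x y : Vtx m, (x = u ∨ x = w) → (y = p ∨ y = q) →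
      phi x y ≠ phi u w ∧ phi x y ≠ phi p q := by
    intro x y hx hy
    have hxy : x ≠ y := by
      rcases hx with rfl | rfl <;> rcases hy with rfl | rfl <;> assumption
    constructor
    · intro he
      have h1 := (phi_eq_elim hxy huw he).1
      rw [hcross_fdb x y hx hy] at h1
      omega
    · intro he
      have h1 := (phi_eq_elim hxy hpq he).1
      rw [hcross_fdb x y hx hy] at h1
      omega
  have hal : ∀ x y : Vtx m, (x = u ∨ x = w) → (y = p ∨ y = q) →
      strToNat (x i) ≠ strToNat (y i) ∧
        (strToNat (x i) < strToNat (y i) ↔ strToNat (u i) < strToNat (p i)) := by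
    intro x y hx hy
    have hxi : x i = u i := by
      rcases hx with rfl | rfl
      · rfl
      · exact hbuw.symm
    have hyi : y i = p i := by
      rcases hy with rfl | rfl
      · rfl
      · exact hbpq0.symm
    rw [hxi, hyi]
    exact ⟨fun e => hbup (strToNat_inj e), Iff.rfl⟩
  exact CORE hS hvu hvw hvp hvq huw hup huq hwp hwq hpq hmate hno3 hc1 hc2 hB i
    (strToNat (u i) < strToNat (p i)) hal

lemma MAIN {v u w p q : Vtx m} {S : Set (Vtx m)}
    (hS : S = {v, u, w, p, q})
    (hvu : v ≠ u) (hvw : v ≠ w) (hvp : v ≠ p) (hvq : v ≠ q)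
    (huw : u ≠ w) (hup : u ≠ p) (huq : u ≠ q) (hwp : w ≠ p) (hwq : w ≠ q) (hpq : p ≠ q)
    (hmate : ∀ x ∈ S, ∀ y ∈ S, x ≠ y → ∃ x' ∈ S, ∃ y' ∈ S,
        x' ≠ y' ∧ s(x',y') ≠ s(x,y) ∧ phi x' y' = phi x y)
    (hno3 : ∀ x y x' y' x'' y'' : Vtx m, x ≠ y → x' ≠ y' → x'' ≠ y'' →
        x ∈ S → y ∈ S → x' ∈ S → y' ∈ S → x'' ∈ S → y'' ∈ S →
        s(x,y) ≠ s(x',y') → s(x,y) ≠ s(x'',y'') → s(x',y') ≠ s(x'',y'') →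
        phi x y = phi x' y' → phi x' y' = phi x'' y'' → False)
    (hc1 : phi v u = phi v w) (hc2 : phi v p = phi v q) (hcc : phi v u ≠ phi v p) :
    False := by
  by_cases hall : ∀ k, firstDiffIdx (v k) (u k) = firstDiffIdx (v k) (p k)
  · exact COREII hS hvu hvw hvp hvq huw hup huq hwp hwq hpq hmate hno3 hc1 hc2 hcc hall
  · push_neg at hall
    obtain ⟨κ, hκ⟩ := hall
    rcases lt_or_gt_of_ne hκ with hl | hl
    · exact COREI hS hvu hvw hvp hvq huw hup huq hwp hwq hpq hmate hno3 hc1 hc2 κ hl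
    · have hS' : S = {v, p, q, u, w} := by
        have hperm : ({p,q,u,w} : Set (Vtx m)) = {u,w,p,q} := by
          rw [Set.insert_comm q u, Set.pair_comm q w, Set.insert_comm p u,
            Set.insert_comm p w]
        rw [hS, ← hperm]
      exact COREI hS' hvp hvq hvu hvw hpq hup.symm hwp.symm huq.symm hwq.symm huw
        hmate hno3 hc2 hc1 κ hl


lemma GLUE2 {v n1 n2 n3 n4 : Vtx m} {S : Set (Vtx m)}
    (hS : S = {v, n1, n2, n3, n4})
    (h1 : v ≠ n1) (h2 : v ≠ n2) (h3 : v ≠ n3) (h4 : v ≠ n4)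
    (h12 : n1 ≠ n2) (h13 : n1 ≠ n3) (h14 : n1 ≠ n4)
    (h23 : n2 ≠ n3) (h24 : n2 ≠ n4) (h34 : n3 ≠ n4)
    (hmate : ∀ x ∈ S, ∀ y ∈ S, x ≠ y → ∃ x' ∈ S, ∃ y' ∈ S,
        x' ≠ y' ∧ s(x',y') ≠ s(x,y) ∧ phi x' y' = phi x y)
    (hno3 : ∀ x y x' y' x'' y'' : Vtx m, x ≠ y → x' ≠ y' → x'' ≠ y'' →
        x ∈ S → y ∈ S → x' ∈ S → y' ∈ S → x'' ∈ S → y'' ∈ S →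
        s(x,y) ≠ s(x',y') → s(x,y) ≠ s(x'',y'') → s(x',y') ≠ s(x'',y'') →
        phi x y = phi x' y' → phi x' y' = phi x'' y'' → False)
    (hcon : ∀ x y z : Vtx m, x ∈ S → y ∈ S → z ∈ S → x ≠ v → y ≠ v → z ≠ v →
        x ≠ y → x ≠ z → y ≠ z →
        (phi v x = phi v y ∨ phi v x = phi v z ∨ phi v y = phi v z)) : False := by
  have mv : v ∈ S := by rw [hS]; simp
  have m1 : n1 ∈ S := by rw [hS]; simp
  have m2 : n2 ∈ S := by rw [hS]; simp
  have m3 : n3 ∈ S := by rw [hS]; simp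
  have m4 : n4 ∈ S := by rw [hS]; simp
  have sne12 : s(v,n1) ≠ s(v,n2) := sym2_ne_aux (Or.inr h12) (Or.inl h2)
  have sne13 : s(v,n1) ≠ s(v,n3) := sym2_ne_aux (Or.inr h13) (Or.inl h3)
  have sne14 : s(v,n1) ≠ s(v,n4) := sym2_ne_aux (Or.inr h14) (Or.inl h4)
  have sne23 : s(v,n2) ≠ s(v,n3) := sym2_ne_aux (Or.inr h23) (Or.inl h3)
  have sne24 : s(v,n2) ≠ s(v,n4) := sym2_ne_aux (Or.inr h24) (Or.inl h4)
  have sne34 : s(v,n3) ≠ s(v,n4) := sym2_ne_aux (Or.inr h34) (Or.inl h4)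
  rcases hcon n1 n2 n3 m1 m2 m3 h1.symm h2.symm h3.symm h12 h13 h23 with hA | hA | hA
  · have hne13 : phi v n1 ≠ phi v n3 := fun hBad =>
      hno3 v n1 v n2 v n3 h1 h2 h3 mv m1 mv m2 mv m3 sne12 sne13 sne23
        hA (hA.symm.trans hBad)
    have hne14 : phi v n1 ≠ phi v n4 := fun hBad =>
      hno3 v n1 v n2 v n4 h1 h2 h4 mv m1 mv m2 mv m4 sne12 sne14 sne24
        hA (hA.symm.trans hBad)
    rcases hcon n2 n3 n4 m2 m3 m4 h2.symm h3.symm h4.symm h23 h24 h34 with hBv | hBv | hBv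
    · exact hne13 (hA.trans hBv)
    · exact hne14 (hA.trans hBv)
    · exact MAIN hS h1 h2 h3 h4 h12 h13 h14 h23 h24 h34 hmate hno3 hA hBv hne13
  · have hne12' : phi v n1 ≠ phi v n2 := fun hBad =>
      hno3 v n1 v n3 v n2 h1 h3 h2 mv m1 mv m3 mv m2 sne13 sne12 (Ne.symm sne23)
        hA (hA.symm.trans hBad)
    have hne14' : phi v n1 ≠ phi v n4 := fun hBad =>
      hno3 v n1 v n3 v n4 h1 h3 h4 mv m1 mv m3 mv m4 sne13 sne14 sne34
        hA (hA.symm.trans hBad)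
    rcases hcon n2 n3 n4 m2 m3 m4 h2.symm h3.symm h4.symm h23 h24 h34 with hBv | hBv | hBv
    · exact hne12' (hA.trans hBv.symm)
    · have hS' : S = {v, n1, n3, n2, n4} := by
        rw [hS, Set.insert_comm n2 n3]
      exact MAIN hS' h1 h3 h2 h4 h13 h12 h14 h23.symm h34 h24 hmate hno3 hA hBv hne12'
    · exact hne14' (hA.trans hBv)
  · have hne21 : phi v n2 ≠ phi v n1 := fun hBad =>
      hno3 v n2 v n3 v n1 h2 h3 h1 mv m2 mv m3 mv m1 sne23 (Ne.symm sne12) (Ne.symm sne13)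
        hA (hA.symm.trans hBad)
    have hne24 : phi v n2 ≠ phi v n4 := fun hBad =>
      hno3 v n2 v n3 v n4 h2 h3 h4 mv m2 mv m3 mv m4 sne23 sne24 sne34
        hA (hA.symm.trans hBad)
    rcases hcon n1 n2 n4 m1 m2 m4 h1.symm h2.symm h4.symm h12 h14 h24 with hBv | hBv | hBv
    · exact hne21 hBv.symm
    · have hS' : S = {v, n2, n3, n1, n4} := by
        rw [hS, Set.insert_comm n1 n2, Set.insert_comm n1 n3]
      exact MAIN hS' h2 h3 h1 h4 h23 h12.symm h24 h13.symm h34 h14 hmate hno3 hA hBv hne21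
    · exact hne24 hBv

end MainArg

/-- In any 2-2-2-2-2 configuration under `φ`, every vertex is incident (within the
configuration) to edges of at least three distinct colors. -/
theorem config_vertex_sees_three_colors (m : ℕ) (hm : 0 < m)
    (a b c d e : Vtx m) (h : IsConfig22222 a b c d e) :
    ∀ v ∈ ({a, b, c, d, e} : Set (Vtx m)),
      ∃ u ∈ ({a, b, c, d, e} : Set (Vtx m)),
        ∃ w ∈ ({a, b, c, d, e} : Set (Vtx m)),
          ∃ z ∈ ({a, b, c, d, e} : Set (Vtx m)),
            u ≠ v ∧ w ≠ v ∧ z ≠ v ∧ u ≠ w ∧ u ≠ z ∧ w ≠ z ∧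
            phi v u ≠ phi v w ∧ phi v u ≠ phi v z ∧ phi v w ≠ phi v z := by
  obtain ⟨hab, hac, had, hae, hbc, hbd, hbe, hcd, hce, hde⟩ := h.1
  intro v hv
  by_contra hcon
  push_neg at hcon
  have hmate := mateS h
  have hno3 := no3S h
  have hcon2 : ∀ x y z : Vtx m, x ∈ ({a,b,c,d,e} : Set (Vtx m)) →
      y ∈ ({a,b,c,d,e} : Set (Vtx m)) → z ∈ ({a,b,c,d,e} : Set (Vtx m)) →
      x ≠ v → y ≠ v → z ≠ v → x ≠ y → x ≠ z → y ≠ z →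
      (phi v x = phi v y ∨ phi v x = phi v z ∨ phi v y = phi v z) := by
    intro x y z hx hy hz hxv hyv hzv hxy hxz hyz
    by_cases e1 : phi v x = phi v y
    · exact Or.inl e1
    by_cases e2 : phi v x = phi v z
    · exact Or.inr (Or.inl e2)
    exact Or.inr (Or.inr (hcon x hx y hy z hz hxv hyv hzv hxy hxz hyz e1 e2))
  clear hcon
  simp only [Set.mem_insert_iff, Set.mem_singleton_iff] at hv
  rcases hv with hveq | hveq | hveq | hveq | hveq <;> rw [hveq] at hcon2
  · exact GLUE2 rfl hab hac had hae hbc hbd hbe hcd hce hde hmate hno3 hcon2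
  · have hS' : ({a,b,c,d,e} : Set (Vtx m)) = {b,a,c,d,e} := Set.insert_comm a b {c,d,e}
    exact GLUE2 hS' hab.symm hbc hbd hbe hac had hae hcd hce hde hmate hno3 hcon2
  · have hS' : ({a,b,c,d,e} : Set (Vtx m)) = {c,a,b,d,e} := by
      rw [Set.insert_comm b c, Set.insert_comm a c]
    exact GLUE2 hS' hac.symm hbc.symm hcd hce hab had hae hbd hbe hde hmate hno3 hcon2
  · have hS' : ({a,b,c,d,e} : Set (Vtx m)) = {d,a,b,c,e} := by
      rw [Set.insert_comm c d, Set.insert_comm b d, Set.insert_comm a d]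
    exact GLUE2 hS' had.symm hbd.symm hcd.symm hde hab hac hae hbc hbe hce hmate hno3 hcon2
  · have hS' : ({a,b,c,d,e} : Set (Vtx m)) = {e,a,b,c,d} := by
      rw [Set.pair_comm d e, Set.insert_comm c e, Set.insert_comm b e, Set.insert_comm a e]
    exact GLUE2 hS' hae.symm hbe.symm hce.symm hde.symm hab hac had hbc hbd hcd
      hmate hno3 hcon2

end CFLS
end

section
/- There do not exist five distinct vertices a, b, c, d, e ∈ V such that φ(ac) = φ(bc), φ(ab) = φ(bd), φ(ad) = φ(de), and φ(ae) = φ(ec), where φ is the Modified CFLS coloring. -/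
namespace CFLS

lemma fdb_symm {m : ℕ} (x y : Vtx m) : firstDiffBlock x y = firstDiffBlock y x := by
  unfold firstDiffBlock
  congr 1
  ext k
  exact ne_comm

lemma diffSet_nonempty {m : ℕ} {x y : Vtx m} (h : x ≠ y) :
    {k | blockAt x k ≠ blockAt y k}.Nonempty := by
  obtain ⟨k, hk⟩ := Function.ne_iff.mp h
  refine ⟨k.val, ?_⟩
  simp only [Set.mem_setOf_eq, blockAt, dif_pos k.isLt]
  simpa using hk

lemma fdb_mem {m : ℕ} {x y : Vtx m} (h : x ≠ y) :
    blockAt x (firstDiffBlock x y) ≠ blockAt y (firstDiffBlock x y) :=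
  Nat.sInf_mem (diffSet_nonempty h)

lemma fdb_min {m : ℕ} {x y : Vtx m} {k : ℕ} (h : k < firstDiffBlock x y) :
    blockAt x k = blockAt y k := by
  by_contra hk
  exact absurd (Nat.sInf_le hk) (not_le.mpr h)

lemma phi_fst {m : ℕ} (x y : Vtx m) :
    (phi x y).1 = (firstDiffBlock x y,
      ({blockAt x (firstDiffBlock x y), blockAt y (firstDiffBlock x y)} :
        Set (Fin m → Bool))) := by
  unfold phi phiAux
  split
  · rfl
  · simp only
    rw [fdb_symm y x, Set.pair_comm]

lemma phi_fst_symm {m : ℕ} (x y : Vtx m) : (phi x y).1 = (phi y x).1 := by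
  rw [phi_fst, phi_fst, fdb_symm y x, Set.pair_comm]

/-- Key lemma: a shared-vertex color equality forces the first-diff-block with the
third vertex to strictly increase. -/
lemma key {m : ℕ} {x y z : Vtx m} (hxy : x ≠ y) (hzy : z ≠ y) (hxz : x ≠ z)
    (h : (phi x y).1 = (phi z y).1) :
    firstDiffBlock x y < firstDiffBlock x z := by
  rw [phi_fst, phi_fst] at h
  obtain ⟨hi, hs⟩ := Prod.mk.injEq .. ▸ h
  set i := firstDiffBlock x y with hidef
  rw [← hi] at hs
  -- blockAt x i = blockAt z i
  have hxiyi : blockAt x i ≠ blockAt y i := fdb_mem hxy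
  have hziyi : blockAt z i ≠ blockAt y i := by
    have := fdb_mem hzy
    rwa [← hi] at this
  have hxz_i : blockAt x i = blockAt z i := by
    have hmem : blockAt x i ∈ ({blockAt z i, blockAt y i} : Set (Fin m → Bool)) := by
      rw [← hs]; exact Set.mem_insert _ _
    rcases hmem with h' | h'
    · exact h'
    · exact absurd h' hxiyi
  -- x and z agree on all blocks ≤ i
  have hagree : ∀ k ≤ i, blockAt x k = blockAt z k := by
    intro k hk
    rcases lt_or_eq_of_le hk with hk | hk
    · have h1 : blockAt x k = blockAt y k := fdb_min hk
      have h2 : blockAt z k = blockAt y k := fdb_min (hi ▸ hk)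
      rw [h1, h2]
    · rw [hk]; exact hxz_i
  -- hence the first diff block of x,z exceeds i
  have hmem : blockAt x (firstDiffBlock x z) ≠ blockAt z (firstDiffBlock x z) :=
    fdb_mem hxz
  by_contra hle
  exact hmem (hagree _ (not_lt.mp hle))

/-- The configuration of Figure (B) is forbidden under the Modified CFLS coloring. -/
theorem no_one_matching_config (m : ℕ) (hm : 0 < m) :
    ¬ ∃ a b c d e : Vtx m, Distinct5 a b c d e ∧
      phi a c = phi b c ∧ phi a b = phi b d ∧ phi a d = phi d e ∧ phi a e = phi e c := by
  rintro ⟨a, b, c, d, e, ⟨hab, hac, had, hae, hbc, hbd, hbe, hcd, hce, hde⟩,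
    h1, h2, h3, h4⟩
  -- from φ(ac)=φ(bc): fdb a c < fdb a b
  have k1 : firstDiffBlock a c < firstDiffBlock a b :=
    key hac hbc hab (by rw [congrArg Prod.fst h1])
  -- from φ(ab)=φ(bd): fdb a b < fdb a d
  have k2 : firstDiffBlock a b < firstDiffBlock a d :=
    key hab (Ne.symm hbd) had (by rw [congrArg Prod.fst h2, phi_fst_symm])
  -- from φ(ad)=φ(de): fdb a d < fdb a e
  have k3 : firstDiffBlock a d < firstDiffBlock a e :=
    key had (Ne.symm hde) hae (by rw [congrArg Prod.fst h3, phi_fst_symm])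
  -- from φ(ae)=φ(ec): fdb a e < fdb a c
  have k4 : firstDiffBlock a e < firstDiffBlock a c :=
    key hae hce hac (by rw [congrArg Prod.fst h4, phi_fst_symm])
  omega

end CFLS
end
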